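/- Let d ≥ K ≥ 2, n ≥ 1, N = Kn, τ > 0, and let a ∈ [0,1] be the label-smoothing parameter. (i) If W₁ ∈ OB(d,K) satisfies W₁ᵀW₁ = (K/(K−1))·(I_K − (1/K)·1_K1_Kᵀ) and H₁ ∈ ℝ^{d×N} has its column indexed by (k,i) equal to the k-th column of W₁ for all k,i, then f_LS(W₁,H₁) = log(1 + (K−1)·exp(−Kτ/(K−1))) + aτ. (ii) If u ∈ ℝ^d is a unit vector, W₂ = u·1_Kᵀ and H₂ = u·1_Nᵀ, then f_LS(W₂,H₂) = log K. Consequently, if a > 0 and aτ ≥ log K, then (W₁,H₁) is not a global minimizer of f_LS over OB(d,K) × OB(d,N), since f_LS(W₁,H₁) > f_LS(W₂,H₂). -/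

import Mathlib

open scoped BigOperators Matrix

/-- The oblique manifold: matrices all of whose columns have unit Euclidean norm. -/
def OB (p : ℕ) (ι : Type) [Fintype ι] : Set (Matrix (Fin p) ι ℝ) :=
  {M | ∀ j, ∑ i, (M i j) ^ 2 = 1}

/-- Label-smoothing loss with smoothing parameter `a`. -/
noncomputable def LLS {K : ℕ} (a : ℝ) (z : Fin K → ℝ) (k : Fin K) : ℝ :=
  -(1 - a * ((K : ℝ) - 1) / K) * Real.log (Real.exp (z k) / ∑ ℓ, Real.exp (z ℓ))
    - (a / K) * ∑ j ∈ Finset.univ.erase k, Real.log (Real.exp (z j) / ∑ ℓ, Real.exp (z ℓ))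

/-- Label-smoothing risk `f_LS(W,H) = (1/N) ∑_k ∑_i L_LS(τ Wᵀ h_{k,i}, k)` with `N = K n`. -/
noncomputable def lsRisk {d K n : ℕ} (τ a : ℝ) (W : Matrix (Fin d) (Fin K) ℝ)
    (H : Matrix (Fin d) (Fin K × Fin n) ℝ) : ℝ :=
  (1 / ((K : ℝ) * n)) * ∑ k : Fin K, ∑ i : Fin n,
    LLS a (fun ℓ => τ * ∑ r, W r ℓ * H r (k, i)) k

theorem label_smoothing_values_and_non_optimality (d K n : ℕ) (hK : 2 ≤ K) (hdK : K ≤ d)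
    (hn : 1 ≤ n) (τ : ℝ) (hτ : 0 < τ) (a : ℝ) (ha0 : 0 ≤ a) (ha1 : a ≤ 1)
    (W₁ : Matrix (Fin d) (Fin K) ℝ) (hW₁ : W₁ ∈ OB d (Fin K))
    (hETF : W₁ᵀ * W₁ = ((K : ℝ) / ((K : ℝ) - 1)) •
      ((1 : Matrix (Fin K) (Fin K) ℝ) - ((K : ℝ))⁻¹ • Matrix.of fun _ _ => (1 : ℝ)))
    (H₁ : Matrix (Fin d) (Fin K × Fin n) ℝ)
    (hH₁ : ∀ (r : Fin d) (k : Fin K) (i : Fin n), H₁ r (k, i) = W₁ r k)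
    (u : Fin d → ℝ) (hu : ∑ r, (u r) ^ 2 = 1)
    (W₂ : Matrix (Fin d) (Fin K) ℝ) (hW₂ : ∀ (r : Fin d) (k : Fin K), W₂ r k = u r)
    (H₂ : Matrix (Fin d) (Fin K × Fin n) ℝ)
    (hH₂ : ∀ (r : Fin d) (j : Fin K × Fin n), H₂ r j = u r) :
    -- (i) value at the simplex-ETF collapsed configuration
    lsRisk τ a W₁ H₁
        = Real.log (1 + ((K : ℝ) - 1) * Real.exp (-((K : ℝ) * τ) / ((K : ℝ) - 1))) + a * τ ∧
    -- (ii) value at the fully collapsed rank-one configuration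
    lsRisk τ a W₂ H₂ = Real.log (K : ℝ) ∧
    -- (iii) if `a > 0` and `a τ ≥ log K`, then `(W₁,H₁)` is not a global minimizer
    (0 < a → Real.log (K : ℝ) ≤ a * τ →
      lsRisk τ a W₂ H₂ < lsRisk τ a W₁ H₁ ∧
      ¬ (∀ (W' : Matrix (Fin d) (Fin K) ℝ) (H' : Matrix (Fin d) (Fin K × Fin n) ℝ),
          W' ∈ OB d (Fin K) → H' ∈ OB d (Fin K × Fin n) →
          lsRisk τ a W₁ H₁ ≤ lsRisk τ a W' H')) := by
  have hK1 : (1:ℝ) < (K:ℝ) := by exact_mod_cast Nat.lt_of_lt_of_le Nat.one_lt_two hK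
  have hK0 : (K:ℝ) ≠ 0 := by linarith
  have hKpos : (0:ℝ) < (K:ℝ) := by linarith
  have hKm1 : (0:ℝ) < (K:ℝ) - 1 := by linarith
  have hKm1' : (K:ℝ) - 1 ≠ 0 := ne_of_gt hKm1
  have hn0 : (0:ℝ) < (n:ℝ) := by exact_mod_cast hn
  set c : ℝ := -τ / ((K:ℝ) - 1) with hc
  set S : ℝ := Real.exp τ + ((K:ℝ) - 1) * Real.exp c with hSdef
  have hS : 0 < S := by positivity
  have hS0 : S ≠ 0 := ne_of_gt hS
  have hcard : ∀ k : Fin K, (Finset.univ.erase k).card = K - 1 := by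
    intro k
    rw [Finset.card_erase_of_mem (Finset.mem_univ k), Finset.card_univ, Fintype.card_fin]
  have hcardR : ∀ k : Fin K, ((Finset.univ.erase k).card : ℝ) = (K:ℝ) - 1 := by
    intro k
    rw [hcard k]
    have : (1:ℕ) ≤ K := le_trans one_le_two hK
    push_cast [this]
    ring
  -- the gram matrix entries
  have hgram : ∀ ℓ k : Fin K, ∑ r, W₁ r ℓ * W₁ r k
      = if ℓ = k then 1 else -1 / ((K:ℝ) - 1) := by
    intro ℓ k
    have h := congrFun (congrFun hETF ℓ) k
    simp only [Matrix.mul_apply, Matrix.transpose_apply, Matrix.smul_apply, Matrix.sub_apply,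
      Matrix.one_apply, Matrix.of_apply, smul_eq_mul] at h
    rw [h]
    by_cases hlk : ℓ = k
    · simp [hlk]
      field_simp
    · simp [hlk]
      field_simp
  -- the loss value at (W₁, H₁) for each (k,i)
  have hL1 : ∀ (k : Fin K) (i : Fin n),
      LLS a (fun ℓ => τ * ∑ r, W₁ r ℓ * H₁ r (k, i)) k = Real.log S - τ + a * τ := by
    intro k i
    have hz : (fun ℓ => τ * ∑ r, W₁ r ℓ * H₁ r (k, i))
        = fun ℓ => if ℓ = k then τ else c := by
      funext ℓ
      simp only [hH₁]
      rw [hgram]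
      by_cases hlk : ℓ = k
      · simp [hlk]
      · simp only [hlk, if_false, hc]
        field_simp
    rw [hz]
    have hsum : ∑ ℓ, Real.exp (if ℓ = k then τ else c) = S := by
      rw [← Finset.add_sum_erase _ _ (Finset.mem_univ k)]
      simp only [if_pos rfl]
      congr 1
      rw [Finset.sum_congr rfl (fun j hj => by
        rw [if_neg (Finset.ne_of_mem_erase hj)]), Finset.sum_const, nsmul_eq_mul, hcardR]
    simp only [LLS]
    rw [hsum]
    simp only [eq_self_iff_true, if_true]
    have hlogk : Real.log (Real.exp τ / S) = τ - Real.log S := by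
      rw [Real.log_div (Real.exp_ne_zero _) hS0, Real.log_exp]
    have hlogsum : ∑ j ∈ Finset.univ.erase k,
        Real.log (Real.exp (if j = k then τ else c) / S)
        = ((K:ℝ) - 1) * (c - Real.log S) := by
      rw [Finset.sum_congr rfl (fun j hj => by
        rw [if_neg (Finset.ne_of_mem_erase hj),
          Real.log_div (Real.exp_ne_zero _) hS0, Real.log_exp]), Finset.sum_const,
        nsmul_eq_mul, hcardR]
    rw [hlogk, hlogsum, hc]
    field_simp
    ring
  -- (i)
  have hlogS : Real.log (1 + ((K:ℝ) - 1) * Real.exp (-((K:ℝ) * τ) / ((K:ℝ) - 1)))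
      = Real.log S - τ := by
    have hprod : 1 + ((K:ℝ) - 1) * Real.exp (-((K:ℝ) * τ) / ((K:ℝ) - 1))
        = S * Real.exp (-τ) := by
      rw [hSdef, add_mul, mul_assoc, ← Real.exp_add, ← Real.exp_add]
      have h1 : τ + -τ = 0 := by ring
      have h2 : c + -τ = -((K:ℝ) * τ) / ((K:ℝ) - 1) := by
        rw [hc]; field_simp; ring
      rw [h1, h2, Real.exp_zero]
    rw [hprod, Real.log_mul hS0 (Real.exp_ne_zero _), Real.log_exp]
    ring
  have hi : lsRisk τ a W₁ H₁
      = Real.log (1 + ((K:ℝ) - 1) * Real.exp (-((K:ℝ) * τ) / ((K:ℝ) - 1))) + a * τ := by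
    unfold lsRisk
    rw [Finset.sum_congr rfl (fun k _ => Finset.sum_congr rfl (fun i _ => hL1 k i))]
    simp only [Finset.sum_const, Finset.card_univ, Fintype.card_fin, nsmul_eq_mul]
    rw [hlogS]
    field_simp
  -- (ii)
  have hL2 : ∀ (k : Fin K) (i : Fin n),
      LLS a (fun ℓ => τ * ∑ r, W₂ r ℓ * H₂ r (k, i)) k = Real.log (K:ℝ) := by
    intro k i
    have hz : (fun ℓ => τ * ∑ r, W₂ r ℓ * H₂ r (k, i)) = fun _ => τ := by
      funext ℓ
      simp only [hW₂, hH₂]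
      rw [Finset.sum_congr rfl (fun r _ => (sq (u r)).symm), hu, mul_one]
    rw [hz]
    simp only [LLS]
    have hsum : ∑ _ℓ : Fin K, Real.exp τ = (K:ℝ) * Real.exp τ := by
      rw [Finset.sum_const, Finset.card_univ, Fintype.card_fin, nsmul_eq_mul]
    rw [hsum]
    have hlog : Real.log (Real.exp τ / ((K:ℝ) * Real.exp τ)) = -Real.log (K:ℝ) := by
      rw [div_mul_eq_div_div_swap, div_self (Real.exp_ne_zero _),
        Real.log_div one_ne_zero hK0, Real.log_one]
      ring
    rw [hlog, Finset.sum_const, nsmul_eq_mul, hcardR]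
    field_simp
    ring
  have hii : lsRisk τ a W₂ H₂ = Real.log (K:ℝ) := by
    unfold lsRisk
    rw [Finset.sum_congr rfl (fun k _ => Finset.sum_congr rfl (fun i _ => hL2 k i))]
    simp only [Finset.sum_const, Finset.card_univ, Fintype.card_fin, nsmul_eq_mul]
    field_simp
  refine ⟨hi, hii, fun hapos haτ => ?_⟩
  have hlt : lsRisk τ a W₂ H₂ < lsRisk τ a W₁ H₁ := by
    rw [hi, hii]
    have hpos : 0 < Real.log (1 + ((K:ℝ) - 1) * Real.exp (-((K:ℝ) * τ) / ((K:ℝ) - 1))) := by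
      apply Real.log_pos
      nlinarith [Real.exp_pos (-((K:ℝ) * τ) / ((K:ℝ) - 1))]
    linarith
  refine ⟨hlt, fun hglob => ?_⟩
  have hW₂mem : W₂ ∈ OB d (Fin K) := by
    intro k
    simp only [hW₂]
    exact hu
  have hH₂mem : H₂ ∈ OB d (Fin K × Fin n) := by
    intro j
    simp only [hH₂]
    exact hu
  exact absurd (hglob W₂ H₂ hW₂mem hH₂mem) (not_le.mpr hlt)
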